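/- Let X ≥ 2, let 1 ≤ Q ≤ X/2, and let c > 0. Then for every α ∈ 𝔪(Q), ∑_{|x| ≤ cX} min{X, ‖xα‖^{−1}} ≪_c (log X)·Q^{−1}·X², where the sum runs over integers x with |x| ≤ cX. -/

import Mathlib

set_option maxHeartbeats 10000000

open Finset
open scoped BigOperators

noncomputable section

/-- major arcs `𝓜(Q)` (for the parameter `X`). -/
def majorArcs (X Q : ℝ) : Set ℝ :=
  {α : ℝ | ∃ q a : ℕ, 1 ≤ a ∧ a ≤ q ∧ (q : ℝ) ≤ Q ∧ Nat.gcd a q = 1 ∧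
    |α - (a : ℝ) / (q : ℝ)| ≤ Q / ((q : ℝ) * X ^ 2)}

/-- the arcs `𝔪(Q) = 𝓜(2Q) \ 𝓜(Q)`. -/
def minorArcsQ (X Q : ℝ) : Set ℝ := majorArcs X (2 * Q) \ majorArcs X Q

/-- distance to the nearest integer. -/
def distNearInt (θ : ℝ) : ℝ := |θ - round θ|

/-- `min {X, ‖θ‖⁻¹}`, with the convention that it equals `X` when `‖θ‖ = 0`. -/
def minPhi (X θ : ℝ) : ℝ := if distNearInt θ = 0 then X else min X (distNearInt θ)⁻¹

section AuxiliaryLemmas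

lemma dni_nonneg (θ : ℝ) : 0 ≤ distNearInt θ := abs_nonneg _

lemma dni_le (θ : ℝ) (n : ℤ) : distNearInt θ ≤ |θ - n| := round_le θ n

lemma dni_le_half (θ : ℝ) : distNearInt θ ≤ 1/2 := abs_sub_round θ

lemma dni_add_int (θ : ℝ) (n : ℤ) : distNearInt (θ + n) = distNearInt θ := by
  unfold distNearInt
  rw [round_add_intCast]
  push_cast
  ring_nf

lemma le_dni (θ t : ℝ) (h : ∀ n : ℤ, t ≤ |θ - n|) : t ≤ distNearInt θ := h (round θ)

lemma dni_sub_abs_le (θ η : ℝ) : distNearInt θ - |η| ≤ distNearInt (θ + η) := by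
  have h1 : distNearInt θ ≤ |θ - round (θ + η)| := dni_le θ _
  have h2 : |θ - (round (θ + η) : ℤ)| - |η| ≤ |θ + η - (round (θ + η) : ℤ)| := by
    have := abs_sub_abs_le_abs_sub (θ - (round (θ + η) : ℤ)) (-η)
    rw [abs_neg] at this
    have e : θ - (round (θ + η) : ℤ) - -η = θ + η - (round (θ + η) : ℤ) := by ring
    rw [e] at this
    linarith
  have h3 : distNearInt (θ + η) = |θ + η - (round (θ + η) : ℤ)| := rfl
  linarith

lemma minPhi_le_X (X θ : ℝ) : minPhi X θ ≤ X := by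
  unfold minPhi; split_ifs
  · exact le_refl _
  · exact min_le_left _ _

lemma minPhi_le_inv (X θ t : ℝ) (ht : 0 < t) (h : t ≤ distNearInt θ) : minPhi X θ ≤ t⁻¹ := by
  unfold minPhi
  split_ifs with h0
  · linarith
  · exact le_trans (min_le_right _ _) (by
      apply inv_anti₀ ht h)

lemma minPhi_nonneg (X θ : ℝ) (hX : 0 ≤ X) : 0 ≤ minPhi X θ := by
  unfold minPhi; split_ifs
  · exact hX
  · exact le_min hX (inv_nonneg.2 (dni_nonneg θ))

lemma minPhi_add_int (X θ : ℝ) (n : ℤ) : minPhi X (θ + n) = minPhi X θ := by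
  unfold minPhi; rw [dni_add_int]

lemma fiber_sum {ι κ : Type*} [DecidableEq κ] (s : Finset ι) (t : Finset κ)
    (g : ι → κ) (F : ι → ℝ) (f : κ → ℝ) (B : ℝ)
    (hmaps : ∀ i ∈ s, g i ∈ t) (hF : ∀ i ∈ s, F i ≤ f (g i)) (hf : ∀ k ∈ t, 0 ≤ f k)
    (hB : ∀ k ∈ t, ((s.filter fun i => g i = k).card : ℝ) ≤ B) :
    ∑ i ∈ s, F i ≤ B * ∑ k ∈ t, f k := by
  calc ∑ i ∈ s, F i ≤ ∑ i ∈ s, f (g i) := Finset.sum_le_sum hF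
    _ = ∑ k ∈ t, ∑ i ∈ s.filter fun i => g i = k, f (g i) :=
        (Finset.sum_fiberwise_of_maps_to hmaps _).symm
    _ ≤ ∑ k ∈ t, B * f k := by
        apply Finset.sum_le_sum
        intro k hk
        have : ∑ i ∈ s.filter (fun i => g i = k), f (g i)
            = ((s.filter fun i => g i = k).card : ℝ) * f k := by
          rw [Finset.sum_congr rfl (fun i hi => by
            rw [(Finset.mem_filter.1 hi).2]), Finset.sum_const, nsmul_eq_mul]
        rw [this]
        exact mul_le_mul_of_nonneg_right (hB k hk) (hf k hk)
    _ = B * ∑ k ∈ t, f k := (Finset.mul_sum _ _ _).symm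

lemma sum_range_inv_le (n : ℕ) : ∑ i ∈ Finset.range n, ((i : ℝ) + 1)⁻¹ ≤ 1 + Real.log n := by
  have h := harmonic_le_one_add_log n
  have e : ((harmonic n : ℚ) : ℝ) = ∑ i ∈ Finset.range n, ((i : ℝ) + 1)⁻¹ := by
    rw [harmonic]
    push_cast
    rfl
  rw [e] at h
  exact h

lemma sum_Icc_inv_le (J : ℤ) (hJ : 0 ≤ J) :
    ∑ z ∈ Finset.Icc (1:ℤ) J, ((z:ℝ))⁻¹ ≤ 1 + Real.log J := by
  have e1 : ∑ z ∈ Finset.Icc (1:ℤ) J, ((z:ℝ))⁻¹ = ∑ i ∈ Finset.range J.toNat, ((i:ℝ)+1)⁻¹ := by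
    refine Finset.sum_nbij' (i := fun z => (z - 1).toNat) (j := fun i => (i : ℤ) + 1) ?_ ?_ ?_ ?_ ?_
    · intro a ha
      simp only [Finset.mem_Icc] at ha
      simp only [Finset.mem_range]
      omega
    · intro a ha
      simp only [Finset.mem_range] at ha
      simp only [Finset.mem_Icc]
      omega
    · intro a ha; simp only [Finset.mem_Icc] at ha; omega
    · intro a ha; simp
    · intro a ha
      simp only [Finset.mem_Icc] at ha
      congr 1
      have h' : ((a - 1).toNat : ℤ) = a - 1 := Int.toNat_of_nonneg (by omega)
      have h'' : (((a - 1).toNat : ℕ) : ℝ) = (a : ℝ) - 1 := by exact_mod_cast congrArg (fun z : ℤ => (z : ℝ)) h'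
      rw [h'']
      ring
  have e2 : ((J.toNat : ℕ) : ℝ) = (J : ℝ) := by exact_mod_cast Int.toNat_of_nonneg hJ
  rw [e1]
  calc _ ≤ 1 + Real.log J.toNat := sum_range_inv_le _
    _ = 1 + Real.log J := by rw [e2]

lemma card_class (N q r : ℤ) (hN : 0 ≤ N) (hq : 0 < q) :
    (((Finset.Icc (-N) N).filter fun x => x % q = r).card : ℝ) ≤ 2*(N:ℝ)/(q:ℝ) + 2 := by
  have hqR : (0:ℝ) < (q:ℝ) := by exact_mod_cast hq
  have hNR : (0:ℝ) ≤ (N:ℝ) := by exact_mod_cast hN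
  have hcard : ((Finset.Icc (-N) N).filter fun x => x % q = r).card
      ≤ (Finset.Icc ((-N)/q) (N/q)).card := by
    apply Finset.card_le_card_of_injOn (fun x => x / q)
    · intro x hx
      simp only [Finset.mem_coe, Finset.mem_filter, Finset.mem_Icc] at hx ⊢
      exact ⟨Int.ediv_le_ediv hq hx.1.1, Int.ediv_le_ediv hq hx.1.2⟩
    · intro x hx y hy hxy
      simp only [Finset.coe_filter, Set.mem_setOf_eq, Finset.mem_Icc] at hx hy
      have ex : x = q * (x / q) + x % q := (Int.mul_ediv_add_emod x q).symm
      have ey : y = q * (y / q) + y % q := (Int.mul_ediv_add_emod y q).symm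
      simp only at hxy
      rw [ex, ey, hxy, hx.2, hy.2]
  rw [Int.card_Icc] at hcard
  set z : ℤ := N / q + 1 - -N / q with hz
  have hBle : (q:ℝ) * ((N / q : ℤ) : ℝ) ≤ (N:ℝ) := by
    have h := Int.mul_ediv_add_emod N q
    have h2 : 0 ≤ N % q := Int.emod_nonneg N (ne_of_gt hq)
    have h3 : q * (N / q) ≤ N := by linarith
    exact_mod_cast h3
  have hAge : -(N:ℝ) - (q:ℝ) + 1 ≤ (q:ℝ) * (((-N) / q : ℤ) : ℝ) := by
    have h := Int.mul_ediv_add_emod (-N) q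
    have h2 : (-N) % q < q := Int.emod_lt_of_pos (-N) hq
    have h3 : -N - q + 1 ≤ q * ((-N) / q) := by linarith
    exact_mod_cast h3
  have hRHS : (0:ℝ) ≤ 2*(N:ℝ)/(q:ℝ) + 2 := by positivity
  rcases le_or_gt z 0 with h | h
  · have : z.toNat = 0 := Int.toNat_of_nonpos h
    calc (((Finset.Icc (-N) N).filter fun x => x % q = r).card : ℝ)
        ≤ (z.toNat : ℝ) := by exact_mod_cast hcard
      _ = 0 := by rw [this]; norm_num
      _ ≤ _ := hRHS
  · have htn : (z.toNat : ℤ) = z := Int.toNat_of_nonneg h.le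
    have hzR : ((z.toNat : ℕ) : ℝ) = ((N / q : ℤ) : ℝ) + 1 - (((-N) / q : ℤ) : ℝ) := by
      have : ((z.toNat : ℤ) : ℝ) = ((z : ℤ) : ℝ) := by exact_mod_cast congrArg (fun t : ℤ => (t:ℝ)) htn
      rw [hz] at this
      push_cast at this ⊢
      linarith
    have key : ((N / q : ℤ) : ℝ) + 1 - (((-N) / q : ℤ) : ℝ) ≤ (2*(N:ℝ) + 2*(q:ℝ))/(q:ℝ) := by
      rw [le_div_iff₀ hqR]
      nlinarith
    have e2 : (2*(N:ℝ) + 2*(q:ℝ))/(q:ℝ) = 2*(N:ℝ)/(q:ℝ) + 2 := by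
      field_simp
    calc (((Finset.Icc (-N) N).filter fun x => x % q = r).card : ℝ)
        ≤ ((z.toNat : ℕ) : ℝ) := by exact_mod_cast hcard
      _ ≤ (2*(N:ℝ) + 2*(q:ℝ))/(q:ℝ) := by rw [hzR]; exact key
      _ = _ := e2

lemma mul_emod_injOn (q a : ℤ) (hq : 0 < q) (hco : IsCoprime q a) :
    Set.InjOn (fun r => (r * a) % q) (Finset.Ico (0:ℤ) q) := by
  intro x hx y hy hxy
  simp only [Finset.coe_Ico, Set.mem_Ico] at hx hy
  simp only at hxy
  have hmod : (x * a) % q = (y * a) % q := hxy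
  have hdvd : q ∣ (x - y) * a := by
    have h1 : q ∣ (x * a) - (y * a) := Int.ModEq.dvd (Int.ModEq.symm hmod)
    have : (x * a) - (y * a) = (x - y) * a := by ring
    rwa [this] at h1
  have hdvd2 : q ∣ (x - y) := hco.dvd_of_dvd_mul_right hdvd
  rcases hdvd2 with ⟨k, hk⟩
  have hk1 : k < 1 := by nlinarith [hx.1, hx.2, hy.1, hy.2]
  have hk2 : -1 < k := by nlinarith [hx.1, hx.2, hy.1, hy.2]
  have hk0 : k = 0 := by omega
  rw [hk0, mul_zero] at hk
  omega

lemma card_badR (q a : ℤ) (c : ℝ) (hq : 0 < q) (hco : IsCoprime q a) (hc : 0 < c) :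
    ((((Finset.Ico (0:ℤ) q).filter
        fun r => ((min ((r*a)%q) (q - (r*a)%q) : ℤ) : ℝ) ≤ c + 2).card : ℝ) ≤ 2*c + 7) := by
  set D : ℤ := ⌊c + 2⌋ with hD
  have hD0 : 0 ≤ D := by
    rw [hD]; exact Int.le_floor.2 (by push_cast; linarith)
  have hDle : (D : ℝ) ≤ c + 2 := Int.floor_le _
  have hcard : (((Finset.Ico (0:ℤ) q).filter
        fun r => ((min ((r*a)%q) (q - (r*a)%q) : ℤ) : ℝ) ≤ c + 2).card
      ≤ (Finset.Icc (0:ℤ) D ∪ Finset.Icc (q - D) q).card) := by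
    apply Finset.card_le_card_of_injOn (fun r => (r * a) % q)
    · intro x hx
      simp only [Finset.mem_coe, Finset.mem_filter, Finset.mem_Ico] at hx
      have hv0 : 0 ≤ (x * a) % q := Int.emod_nonneg _ (ne_of_gt hq)
      have hvq : (x * a) % q < q := Int.emod_lt_of_pos _ hq
      have hmin : min ((x*a)%q) (q - (x*a)%q) ≤ D := Int.le_floor.2 hx.2
      simp only [Finset.mem_coe, Finset.mem_union, Finset.mem_Icc]
      rcases min_le_iff.1 hmin with h | h
      · exact Or.inl ⟨hv0, h⟩
      · exact Or.inr ⟨by omega, by omega⟩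
    · exact (mul_emod_injOn q a hq hco).mono (by
        intro x hx
        simp only [Finset.coe_filter, Set.mem_setOf_eq] at hx
        simp only [Finset.coe_Ico]
        simp only [Finset.mem_Ico] at hx
        exact ⟨hx.1.1, hx.1.2⟩)
  have hcard2 : (Finset.Icc (0:ℤ) D ∪ Finset.Icc (q - D) q).card ≤ (D+1).toNat + (D+1).toNat := by
    calc _ ≤ (Finset.Icc (0:ℤ) D).card + (Finset.Icc (q-D) q).card := Finset.card_union_le _ _
      _ = (D + 1 - 0).toNat + (q + 1 - (q - D)).toNat := by rw [Int.card_Icc, Int.card_Icc]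
      _ = (D+1).toNat + (D+1).toNat := by norm_num; congr 1; omega
  have : (((D+1).toNat : ℝ)) ≤ c + 3 := by
    have : ((D+1).toNat : ℤ) = D + 1 := Int.toNat_of_nonneg (by omega)
    have h2 : (((D+1).toNat : ℤ) : ℝ) = (D:ℝ) + 1 := by rw [this]; push_cast; ring
    push_cast at h2 ⊢
    linarith
  calc ((((Finset.Ico (0:ℤ) q).filter
        fun r => ((min ((r*a)%q) (q - (r*a)%q) : ℤ) : ℝ) ≤ c + 2).card : ℝ))
      ≤ (((D+1).toNat + (D+1).toNat : ℕ) : ℝ) := by exact_mod_cast le_trans hcard hcard2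
    _ = ((D+1).toNat : ℝ) + ((D+1).toNat : ℝ) := by push_cast; ring
    _ ≤ 2*c + 7 := by linarith

lemma sum_k_inv (q a : ℤ) (hq : 0 < q) (hco : IsCoprime q a) :
    ∑ r ∈ Finset.Ico (0:ℤ) q, ((min ((r*a)%q) (q - (r*a)%q) : ℤ) : ℝ)⁻¹
      ≤ 2 * (1 + Real.log q) := by
  have hinj := mul_emod_injOn q a hq hco
  have e1 : ∑ r ∈ Finset.Ico (0:ℤ) q, ((min ((r*a)%q) (q - (r*a)%q) : ℤ) : ℝ)⁻¹
      = ∑ w ∈ (Finset.Ico (0:ℤ) q).image (fun r => (r*a)%q),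
          ((min w (q - w) : ℤ) : ℝ)⁻¹ := by
    rw [Finset.sum_image (fun x hx y hy h => hinj (by simpa using hx) (by simpa using hy) h)]
  have himg : (Finset.Ico (0:ℤ) q).image (fun r => (r*a)%q) ⊆ Finset.Ico (0:ℤ) q := by
    intro w hw
    simp only [Finset.mem_image] at hw
    obtain ⟨r, _, rfl⟩ := hw
    simp only [Finset.mem_Ico]
    exact ⟨Int.emod_nonneg _ (ne_of_gt hq), Int.emod_lt_of_pos _ hq⟩
  have e2 : ∑ w ∈ (Finset.Ico (0:ℤ) q).image (fun r => (r*a)%q), ((min w (q - w) : ℤ) : ℝ)⁻¹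
      ≤ ∑ w ∈ Finset.Ico (0:ℤ) q, ((min w (q - w) : ℤ) : ℝ)⁻¹ := by
    apply Finset.sum_le_sum_of_subset_of_nonneg himg
    intro w hw _
    simp only [Finset.mem_Ico] at hw
    have hmm : (0:ℤ) ≤ min w (q - w) := le_min hw.1 (by omega)
    have h0 : (0:ℝ) ≤ ((min w (q - w) : ℤ) : ℝ) := by exact_mod_cast hmm
    exact inv_nonneg.2 h0
  have e3 : ∑ w ∈ Finset.Ico (0:ℤ) q, ((min w (q - w) : ℤ) : ℝ)⁻¹
      ≤ ∑ w ∈ Finset.Ico (0:ℤ) q, (((w : ℝ))⁻¹ + (((q - w : ℤ)) : ℝ)⁻¹) := by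
    apply Finset.sum_le_sum
    intro w hw
    simp only [Finset.mem_Ico] at hw
    have hqw : (0:ℝ) < ((q - w : ℤ) : ℝ) := by exact_mod_cast (by omega : (0:ℤ) < q - w)
    have hw0 : (0:ℝ) ≤ (w : ℝ) := by exact_mod_cast hw.1
    rcases min_cases w (q - w) with ⟨hmin, _⟩ | ⟨hmin, _⟩ <;> rw [hmin]
    · have : (0:ℝ) ≤ ((q - w : ℤ) : ℝ)⁻¹ := by positivity
      linarith
    · have : (0:ℝ) ≤ ((w : ℝ))⁻¹ := by positivity
      linarith
  have e4 : ∑ w ∈ Finset.Ico (0:ℤ) q, ((w : ℝ))⁻¹ ≤ 1 + Real.log q := by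
    have hIco : Finset.Ico (0:ℤ) q = insert 0 (Finset.Ico (1:ℤ) q) := by
      ext x; simp only [Finset.mem_Ico, Finset.mem_insert]; omega
    rw [hIco, Finset.sum_insert (by simp)]
    simp only [Int.cast_zero, inv_zero, zero_add]
    have hsub : Finset.Ico (1:ℤ) q ⊆ Finset.Icc (1:ℤ) q := by
      intro x hx; simp only [Finset.mem_Ico] at hx; simp only [Finset.mem_Icc]; omega
    calc ∑ w ∈ Finset.Ico (1:ℤ) q, ((w : ℝ))⁻¹
        ≤ ∑ w ∈ Finset.Icc (1:ℤ) q, ((w : ℝ))⁻¹ := by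
          apply Finset.sum_le_sum_of_subset_of_nonneg hsub
          intro w hw _
          simp only [Finset.mem_Icc] at hw
          have : (0:ℝ) < (w:ℝ) := by exact_mod_cast hw.1
          positivity
      _ ≤ 1 + Real.log q := sum_Icc_inv_le q hq.le
  have e5 : ∑ w ∈ Finset.Ico (0:ℤ) q, (((q - w : ℤ)) : ℝ)⁻¹ ≤ 1 + Real.log q := by
    have e : ∑ w ∈ Finset.Ico (0:ℤ) q, (((q - w : ℤ)) : ℝ)⁻¹
        = ∑ y ∈ Finset.Icc (1:ℤ) q, ((y : ℝ))⁻¹ := by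
      refine Finset.sum_nbij' (i := fun w => q - w) (j := fun y => q - y) ?_ ?_ ?_ ?_ ?_
      · intro w hw; simp only [Finset.mem_Ico] at hw; simp only [Finset.mem_Icc]; omega
      · intro y hy; simp only [Finset.mem_Icc] at hy; simp only [Finset.mem_Ico]; omega
      · intro w hw; omega
      · intro y hy; omega
      · intro w hw; rfl
    rw [e]
    exact sum_Icc_inv_le q hq.le
  calc ∑ r ∈ Finset.Ico (0:ℤ) q, ((min ((r*a)%q) (q - (r*a)%q) : ℤ) : ℝ)⁻¹
      ≤ ∑ w ∈ Finset.Ico (0:ℤ) q, (((w : ℝ))⁻¹ + (((q - w : ℤ)) : ℝ)⁻¹) := by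
        rw [e1]; exact le_trans e2 e3
    _ = ∑ w ∈ Finset.Ico (0:ℤ) q, ((w : ℝ))⁻¹ + ∑ w ∈ Finset.Ico (0:ℤ) q, (((q - w : ℤ)) : ℝ)⁻¹ :=
        Finset.sum_add_distrib
    _ ≤ 2 * (1 + Real.log q) := by linarith

def wb (z : ℤ) : ℤ := if 0 ≤ z then z else -z - 1

lemma wb_nonneg (z : ℤ) : 0 ≤ wb z := by unfold wb; split_ifs <;> omega

lemma wb_of_nonneg {z : ℤ} (h : 0 ≤ z) : wb z = z := if_pos h

lemma wb_of_neg {z : ℤ} (h : ¬ 0 ≤ z) : wb z = -z - 1 := if_neg h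

lemma ap_sum (X γ δ : ℝ) (hX : 2 ≤ X) (hδ : δ ≠ 0) (s : Finset ℤ) (u L : ℝ) (hL : 0 ≤ L)
    (hmem : ∀ m ∈ s, u ≤ γ + m * δ ∧ γ + m * δ ≤ u + L) :
    ∑ m ∈ s, minPhi X (γ + m * δ)
      ≤ (L + 2) * (2*X + (2/|δ|) * (1 + Real.log (1/(2*|δ|) + 1))) := by
  set D : ℝ := |δ| with hDdef
  have hD : 0 < D := abs_pos.2 hδ
  set J : ℤ := ⌊1/(2*D)⌋ with hJdef
  have hJ0 : 0 ≤ J := Int.floor_nonneg.2 (by positivity)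
  set f : ℤ × ℤ → ℝ := fun p => if wb p.2 = 0 then X else ((wb p.2 : ℝ) * D)⁻¹ with hf
  have hf_nonneg : ∀ p, 0 ≤ f p := by
    intro p; rw [hf]; dsimp only; split_ifs with h
    · linarith
    · have h1 : (1:ℤ) ≤ wb p.2 := by have := wb_nonneg p.2; omega
      have : (0:ℝ) < (wb p.2 : ℝ) := by exact_mod_cast lt_of_lt_of_le zero_lt_one h1
      positivity
  set g : ℤ → ℤ × ℤ := fun m => (round (γ + m * δ), ⌊(γ + m * δ - round (γ + m * δ))/D⌋) with hg
  set V : Finset ℤ := Finset.Icc ⌈u - 1/2⌉ ⌊u + L + 1/2⌋ with hV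
  set Z : Finset ℤ := Finset.Icc (-(J+1)) J with hZ
  -- floor bracketing for the bucket index
  have hbucket : ∀ m : ℤ, ((⌊(γ + m * δ - round (γ + m * δ))/D⌋ : ℝ)) * D
      ≤ γ + m * δ - round (γ + m * δ) ∧
      γ + m * δ - round (γ + m * δ) < ((⌊(γ + m * δ - round (γ + m * δ))/D⌋ : ℝ) + 1) * D := by
    intro m
    set x := γ + m * δ - round (γ + m * δ)
    constructor
    · rw [← le_div_iff₀ hD]; exact Int.floor_le _
    · rw [← div_lt_iff₀ hD]; exact Int.lt_floor_add_one _
  -- g maps into V ×ˢ Z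
  have hmaps : ∀ m ∈ s, g m ∈ V ×ˢ Z := by
    intro m hm
    obtain ⟨h1, h2⟩ := hmem m hm
    have habs := abs_sub_round (γ + m * δ)
    rw [Finset.mem_product]
    constructor
    · rw [hV, Finset.mem_Icc]
      have hrl : u - 1/2 ≤ (round (γ + m * δ) : ℝ) := by
        cases abs_le.1 habs with
        | intro ha hb => linarith
      have hru : (round (γ + m * δ) : ℝ) ≤ u + L + 1/2 := by
        cases abs_le.1 habs with
        | intro ha hb => linarith
      exact ⟨Int.ceil_le.2 hrl, Int.le_floor.2 hru⟩
    · rw [hZ, Finset.mem_Icc]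
      obtain ⟨hb1, hb2⟩ := hbucket m
      have hub : (γ + m * δ - round (γ + m * δ)) ≤ 1/2 := by
        cases abs_le.1 habs with | intro ha hb => linarith
      have hlb : -(1/2) ≤ (γ + m * δ - round (γ + m * δ)) := by
        cases abs_le.1 habs with | intro ha hb => linarith
      constructor
      · -- lower bound on floor
        have : (((-(J+1)) : ℤ) : ℝ) ≤ (γ + m * δ - round (γ + m * δ))/D := by
          have hJlt : 1/(2*D) < (J : ℝ) + 1 := Int.lt_floor_add_one _
          have hJlt2 : 1 < ((J:ℝ) + 1) * (2*D) := by
            rw [div_lt_iff₀ (by positivity : (0:ℝ) < 2*D)] at hJlt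
            linarith
          push_cast
          rw [le_div_iff₀ hD]
          nlinarith
        exact Int.le_floor.2 this
      · have : (γ + m * δ - round (γ + m * δ))/D ≤ 1/(2*D) := by
          rw [div_le_div_iff₀ hD (by positivity : (0:ℝ) < 2*D)]
          nlinarith
        exact le_trans (Int.floor_le_floor this) (le_of_eq rfl)
  -- pointwise bound
  have hpt : ∀ m ∈ s, minPhi X (γ + m * δ) ≤ f (g m) := by
    intro m hm
    obtain ⟨hb1, hb2⟩ := hbucket m
    rw [hf, hg]
    dsimp only
    set z : ℤ := ⌊(γ + m * δ - round (γ + m * δ))/D⌋ with hzdef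
    split_ifs with h0
    · exact minPhi_le_X X _
    · have hwz : (1:ℤ) ≤ wb z := by have := wb_nonneg z; omega
      have hwzR : (0:ℝ) < (wb z : ℝ) := by exact_mod_cast lt_of_lt_of_le zero_lt_one hwz
      apply minPhi_le_inv X _ _ (by positivity)
      have hdni : distNearInt (γ + m * δ) = |γ + m * δ - round (γ + m * δ)| := rfl
      rw [hdni]
      by_cases hz0 : (0:ℤ) ≤ z
      · -- z ≥ 0, and z ≠ 0 since wb z ≠ 0
        rw [wb_of_nonneg hz0]
        have hz1 : (1:ℤ) ≤ z := by rw [wb_of_nonneg hz0] at h0; omega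
        have hz1R : (1:ℝ) ≤ (z:ℝ) := by exact_mod_cast hz1
        have hxpos : (z:ℝ) * D ≤ γ + m * δ - round (γ + m * δ) := hb1
        rw [abs_of_nonneg (by nlinarith)]
        exact hxpos
      · -- z < 0; wb z = -z - 1 ≥ 1 so z ≤ -2
        rw [wb_of_neg hz0]
        have hz2 : z ≤ -2 := by rw [wb_of_neg hz0] at h0; omega
        have hneg : γ + m * δ - round (γ + m * δ) < ((z:ℝ) + 1) * D := hb2
        have hzR : ((z:ℝ) + 1) ≤ -1 := by exact_mod_cast (by omega : z + 1 ≤ -1)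
        rw [abs_of_nonpos (by nlinarith)]
        push_cast
        nlinarith
  -- sum over image
  have hinj : ∀ x ∈ s, ∀ y ∈ s, g x = g y → x = y := by
    intro m hm m' hm' hgm
    rw [hg] at hgm
    dsimp only at hgm
    have hv : round (γ + m * δ) = round (γ + m' * δ) := (Prod.mk.injEq _ _ _ _ ▸ hgm).1
    have hz : ⌊(γ + m * δ - round (γ + m * δ))/D⌋ = ⌊(γ + m' * δ - round (γ + m' * δ))/D⌋ :=
      (Prod.mk.injEq _ _ _ _ ▸ hgm).2
    obtain ⟨hb1, hb2⟩ := hbucket m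
    obtain ⟨hb1', hb2'⟩ := hbucket m'
    rw [← hz, ← hv] at hb1' hb2'
    have hdiff : |γ + m * δ - (γ + m' * δ)| < D := by
      rw [abs_lt]; constructor <;> nlinarith
    have : |((m - m' : ℤ) : ℝ)| * |δ| < D := by
      rw [← abs_mul]
      have e : ((m - m' : ℤ) : ℝ) * δ = γ + m * δ - (γ + m' * δ) := by push_cast; ring
      rw [e]; exact hdiff
    have habs1 : |((m - m' : ℤ) : ℝ)| < 1 := by
      by_contra hcon
      push_neg at hcon
      nlinarith [abs_nonneg ((m - m' : ℤ) : ℝ)]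
    have habs2 : ((|m - m'| : ℤ) : ℝ) < 1 := by rw [Int.cast_abs]; exact habs1
    have habs3 : |m - m'| < (1:ℤ) := by exact_mod_cast habs2
    obtain ⟨hc1, hc2⟩ := abs_lt.1 habs3
    omega
  calc ∑ m ∈ s, minPhi X (γ + m * δ)
      ≤ ∑ m ∈ s, f (g m) := Finset.sum_le_sum hpt
    _ = ∑ p ∈ s.image g, f p := (Finset.sum_image hinj).symm
    _ ≤ ∑ p ∈ V ×ˢ Z, f p := by
        apply Finset.sum_le_sum_of_subset_of_nonneg
        · intro p hp
          obtain ⟨m, hm, rfl⟩ := Finset.mem_image.1 hp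
          exact hmaps m hm
        · intro p _ _; exact hf_nonneg p
    _ = ∑ v ∈ V, ∑ z ∈ Z, f (v, z) := Finset.sum_product V Z f
    _ = (V.card : ℝ) * ∑ z ∈ Z, f (0, z) := by
        have hcst : ∀ v ∈ V, ∑ z ∈ Z, f (v, z) = ∑ z ∈ Z, f (0, z) := fun v _ => rfl
        rw [Finset.sum_congr rfl hcst, Finset.sum_const, nsmul_eq_mul]
    _ ≤ (L + 2) * (2*X + (2/|δ|) * (1 + Real.log (1/(2*|δ|) + 1))) := by
        have hVcard : (V.card : ℝ) ≤ L + 2 := by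
          rw [hV, Int.card_Icc]
          set zz : ℤ := ⌊u + L + 1/2⌋ + 1 - ⌈u - 1/2⌉ with hzz
          have hfl : (⌊u + L + 1/2⌋ : ℝ) ≤ u + L + 1/2 := Int.floor_le _
          have hce : u - 1/2 ≤ (⌈u - 1/2⌉ : ℝ) := Int.le_ceil _
          rcases le_or_gt zz 0 with h | h
          · rw [Int.toNat_of_nonpos h]; norm_num; linarith
          · have : (zz.toNat : ℤ) = zz := Int.toNat_of_nonneg h.le
            have h2 : ((zz.toNat : ℕ) : ℝ) = ((zz : ℤ) : ℝ) := by exact_mod_cast congrArg (fun t : ℤ => (t:ℝ)) this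
            rw [h2, hzz]
            push_cast
            linarith
        have hsplit : Z = Finset.Icc (-(J+1)) (-1) ∪ Finset.Icc 0 J := by
          rw [hZ]; ext x; simp only [Finset.mem_Icc, Finset.mem_union]; omega
        have hdisj : Disjoint (Finset.Icc (-(J+1)) (-1)) (Finset.Icc (0:ℤ) J) := by
          rw [Finset.disjoint_left]
          intro x hx hx'
          simp only [Finset.mem_Icc] at hx hx'
          omega
        have hneg_eq : ∑ z ∈ Finset.Icc (-(J+1)) (-1), f (0, z)
            = ∑ z ∈ Finset.Icc (0:ℤ) J, f (0, z) := by
          refine Finset.sum_nbij' (i := fun z => -z - 1) (j := fun z => -z - 1) ?_ ?_ ?_ ?_ ?_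
          · intro z hz; simp only [Finset.mem_Icc] at hz ⊢; omega
          · intro z hz; simp only [Finset.mem_Icc] at hz ⊢; omega
          · intro z hz; omega
          · intro z hz; omega
          · intro z hz
            simp only [Finset.mem_Icc] at hz
            have hwbeq : wb z = wb (-z - 1) := by
              rw [wb_of_neg (by omega), wb_of_nonneg (by omega)]
            rw [hf]
            dsimp only
            rw [hwbeq]
        have hpos_eq : ∑ z ∈ Finset.Icc (0:ℤ) J, f (0, z)
            = X + ∑ z ∈ Finset.Icc (1:ℤ) J, ((z : ℝ) * D)⁻¹ := by
          have hins : Finset.Icc (0:ℤ) J = insert 0 (Finset.Icc (1:ℤ) J) := by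
            ext x; simp only [Finset.mem_Icc, Finset.mem_insert]; omega
          have h00 : f ((0:ℤ), (0:ℤ)) = X := by
            rw [hf]; dsimp only; rw [wb_of_nonneg le_rfl]; simp
          have hzz : ∀ z ∈ Finset.Icc (1:ℤ) J, f (0, z) = ((z : ℝ) * D)⁻¹ := by
            intro z hz
            simp only [Finset.mem_Icc] at hz
            rw [hf]; dsimp only
            rw [wb_of_nonneg (by omega)]
            rw [if_neg (by omega)]
          rw [hins, Finset.sum_insert (by simp), h00, Finset.sum_congr rfl hzz]
        have hS : ∑ z ∈ Finset.Icc (1:ℤ) J, ((z : ℝ) * D)⁻¹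
            ≤ D⁻¹ * (1 + Real.log (1/(2*D) + 1)) := by
          have e : ∑ z ∈ Finset.Icc (1:ℤ) J, ((z : ℝ) * D)⁻¹
              = D⁻¹ * ∑ z ∈ Finset.Icc (1:ℤ) J, ((z : ℝ))⁻¹ := by
            rw [Finset.mul_sum]
            apply Finset.sum_congr rfl
            intro z hz
            rw [mul_inv]
            ring
          rw [e]
          have hlog : Real.log (J : ℝ) ≤ Real.log (1/(2*D) + 1) := by
            rcases eq_or_lt_of_le hJ0 with h | h
            · rw [← h]
              simp only [Int.cast_zero, Real.log_zero]
              refine Real.log_nonneg ?_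
              have : (0:ℝ) < 1/(2*D) := by positivity
              linarith
            · have hJ1 : (1:ℝ) ≤ (J:ℝ) := by exact_mod_cast h
              apply Real.log_le_log (by linarith)
              have := Int.floor_le (1/(2*D))
              rw [← hJdef] at this
              linarith
          have hharm := sum_Icc_inv_le J hJ0
          have hsum_nonneg : (0:ℝ) ≤ ∑ z ∈ Finset.Icc (1:ℤ) J, ((z : ℝ))⁻¹ := by
            apply Finset.sum_nonneg
            intro z hz
            simp only [Finset.mem_Icc] at hz
            have : (0:ℝ) < (z:ℝ) := by exact_mod_cast hz.1
            positivity
          have hDinv : (0:ℝ) ≤ D⁻¹ := by positivity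
          calc D⁻¹ * ∑ z ∈ Finset.Icc (1:ℤ) J, ((z : ℝ))⁻¹
              ≤ D⁻¹ * (1 + Real.log J) := by apply mul_le_mul_of_nonneg_left hharm hDinv
            _ ≤ D⁻¹ * (1 + Real.log (1/(2*D) + 1)) := by
                apply mul_le_mul_of_nonneg_left _ hDinv
                linarith
        have hinner : ∑ z ∈ Z, f (0, z) ≤ 2*X + (2/D) * (1 + Real.log (1/(2*D) + 1)) := by
          rw [hsplit, Finset.sum_union hdisj, hneg_eq, hpos_eq]
          have : (2:ℝ)/D = 2 * D⁻¹ := by ring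
          rw [this]
          linarith
        have hinner_nonneg : (0:ℝ) ≤ ∑ z ∈ Z, f (0, z) :=
          Finset.sum_nonneg (fun z _ => hf_nonneg (0, z))
        have hcard_nonneg : (0:ℝ) ≤ (V.card : ℝ) := by positivity
        calc (V.card : ℝ) * ∑ z ∈ Z, f (0, z)
            ≤ (L + 2) * (2*X + (2/D) * (1 + Real.log (1/(2*D) + 1))) := by
              apply mul_le_mul hVcard hinner hinner_nonneg (by linarith)
          _ = (L + 2) * (2*X + (2/|δ|) * (1 + Real.log (1/(2*|δ|) + 1))) := by rw [hDdef]

end AuxiliaryLemmas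

/-- For `α ∈ 𝔪(Q)`,
`∑_{|x| ≤ cX} min{X, ‖xα‖⁻¹} ≪_c (log X) Q⁻¹ X²`. -/
theorem statement7 (c : ℝ) (hc : 0 < c) :
    ∃ C : ℝ, 0 < C ∧ ∀ X Q : ℝ, 2 ≤ X → 1 ≤ Q → Q ≤ X / 2 →
      ∀ α ∈ minorArcsQ X Q,
        ∑ x ∈ Finset.Icc (-⌊c * X⌋) ⌊c * X⌋, minPhi X ((x : ℝ) * α) ≤
          C * Real.log X * Q⁻¹ * X ^ 2 := by
  classical
  refine ⟨1000 * (c + 2)^3, by positivity, ?_⟩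
  intro X Q hX hQ hQX α hα
  obtain ⟨hM2Q, hnot⟩ := hα
  obtain ⟨q, a, ha1, haq, hq2Q, hgcd, habs⟩ := hM2Q
  -- basic positivity
  have hX0 : (0:ℝ) < X := by linarith
  have hQ0 : (0:ℝ) < Q := by linarith
  have hq1 : 1 ≤ q := le_trans ha1 haq
  have hqZ : (0:ℤ) < (q:ℤ) := by exact_mod_cast hq1
  have hqR : (0:ℝ) < (q:ℝ) := by exact_mod_cast hq1
  have hqR1 : (1:ℝ) ≤ (q:ℝ) := by exact_mod_cast hq1
  have h2QX : 2*Q ≤ X := by linarith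
  have hqX : (q:ℝ) ≤ X := le_trans hq2Q h2QX
  set β : ℝ := α - (a:ℝ)/(q:ℝ) with hβdef
  have hβ : |β| ≤ 2*Q/((q:ℝ)*X^2) := by
    rw [hβdef]
    calc |α - (a:ℝ)/(q:ℝ)| ≤ (2*Q) / ((q:ℝ) * X^2) := habs
      _ = 2*Q/((q:ℝ)*X^2) := by ring
  -- dichotomy from not being in the Q-major arcs
  have hdich : Q < (q:ℝ) ∨ Q/((q:ℝ)*X^2) < |β| := by
    by_contra hcon
    push_neg at hcon
    refine hnot ⟨q, a, ha1, haq, hcon.1, hgcd, ?_⟩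
    rw [← hβdef]
    exact hcon.2
  -- notation
  set N : ℤ := ⌊c * X⌋ with hNdef
  have hN0 : (0:ℤ) ≤ N := Int.floor_nonneg.2 (by positivity)
  have hNcX : (N:ℝ) ≤ c * X := Int.floor_le _
  set qZ : ℤ := (q:ℤ) with hqZdef
  set aZ : ℤ := (a:ℤ) with haZdef
  have hqZR : ((qZ : ℤ) : ℝ) = (q:ℝ) := by rw [hqZdef]; push_cast; rfl
  have haZR : ((aZ : ℤ) : ℝ) = (a:ℝ) := by rw [haZdef]; push_cast; rfl
  have hco : IsCoprime qZ aZ := by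
    rw [Int.isCoprime_iff_gcd_eq_one]
    rw [hqZdef, haZdef]
    have : Int.gcd (q:ℤ) (a:ℤ) = Nat.gcd q a := Int.gcd_natCast_natCast q a
    rw [this, Nat.gcd_comm]
    exact hgcd
  have hv_nonneg : ∀ r : ℤ, 0 ≤ (r * aZ) % qZ := fun r => Int.emod_nonneg _ (ne_of_gt hqZ)
  have hv_lt : ∀ r : ℤ, (r * aZ) % qZ < qZ := fun r => Int.emod_lt_of_pos _ hqZ
  have hvx : ∀ x : ℤ, ((x % qZ) * aZ) % qZ = (x * aZ) % qZ := by
    intro x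
    have h1 : (x % qZ * aZ) % qZ = ((x % qZ % qZ) * (aZ % qZ)) % qZ := Int.mul_emod _ _ _
    have h2 : x % qZ % qZ = x % qZ := Int.emod_emod_of_dvd _ dvd_rfl
    have h3 : (x * aZ) % qZ = ((x % qZ) * (aZ % qZ)) % qZ := Int.mul_emod _ _ _
    rw [h1, h2, ← h3]
  -- decomposition of x * α modulo 1
  have hdecomp : ∀ x : ℤ, (x:ℝ) * α
      = ((((x % qZ) * aZ) % qZ : ℤ):ℝ)/(q:ℝ) + (x:ℝ)*β + ((x * aZ / qZ : ℤ) : ℝ) := by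
    intro x
    have hid : qZ * (x * aZ / qZ) + (x * aZ) % qZ = x * aZ := Int.mul_ediv_add_emod _ _
    have hidR : ((qZ:ℤ):ℝ) * ((x * aZ / qZ : ℤ) : ℝ) + (((x * aZ) % qZ : ℤ) : ℝ)
        = ((x:ℤ):ℝ) * ((aZ:ℤ):ℝ) := by exact_mod_cast congrArg (fun t : ℤ => (t:ℝ)) hid
    rw [hqZR, haZR] at hidR
    have hvxR : ((((x % qZ) * aZ) % qZ : ℤ):ℝ) = (((x * aZ) % qZ : ℤ) : ℝ) := by rw [hvx x]
    have e2 : (x:ℝ)*(a:ℝ)/(q:ℝ) = ((((x % qZ) * aZ) % qZ : ℤ):ℝ)/(q:ℝ) + ((x * aZ / qZ : ℤ) : ℝ) := by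
      rw [hvxR]
      have hq0 : (q:ℝ) ≠ 0 := ne_of_gt hqR
      field_simp
      linarith [hidR]
    have e1 : (x:ℝ) * α = (x:ℝ)*(a:ℝ)/(q:ℝ) + (x:ℝ)*β := by rw [hβdef]; ring
    rw [e1, e2]; ring
  have hminPhi_eq : ∀ x : ℤ, minPhi X ((x:ℝ) * α)
      = minPhi X (((((x % qZ) * aZ) % qZ : ℤ):ℝ)/(q:ℝ) + (x:ℝ)*β) := by
    intro x
    rw [hdecomp x, minPhi_add_int]
  have hxβ : ∀ x : ℤ, x ∈ Finset.Icc (-N) N → |(x:ℝ)*β| ≤ c/(q:ℝ) := by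
    intro x hx
    simp only [Finset.mem_Icc] at hx
    have hx1 : -(c*X) ≤ (x:ℝ) := by
      have : ((-N : ℤ):ℝ) ≤ (x:ℝ) := by exact_mod_cast hx.1
      push_cast at this
      linarith
    have hx2 : (x:ℝ) ≤ c*X := by
      have : (x:ℝ) ≤ ((N : ℤ):ℝ) := by exact_mod_cast hx.2
      linarith
    have hxabs : |(x:ℝ)| ≤ c * X := abs_le.2 ⟨hx1, hx2⟩
    calc |(x:ℝ)*β| = |(x:ℝ)| * |β| := abs_mul _ _
      _ ≤ (c*X) * (2*Q/((q:ℝ)*X^2)) := mul_le_mul hxabs hβ (abs_nonneg β) (by positivity)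
      _ = (c/(q:ℝ)) * (2*Q/X) := by field_simp
      _ ≤ (c/(q:ℝ)) * 1 := by
          apply mul_le_mul_of_nonneg_left _ (by positivity)
          rw [div_le_one hX0]; linarith
      _ = c/(q:ℝ) := mul_one _
  -- lower bound for distNearInt of (v r)/q
  have hdnivq : ∀ r : ℤ,
      ((min ((r * aZ) % qZ) (qZ - (r * aZ) % qZ) : ℤ):ℝ)/(q:ℝ)
        ≤ distNearInt ((((r * aZ) % qZ : ℤ):ℝ)/(q:ℝ)) := by
    intro r
    apply le_dni
    intro n
    have hkv1 : ((min ((r * aZ) % qZ) (qZ - (r * aZ) % qZ) : ℤ):ℝ) ≤ (((r * aZ) % qZ : ℤ):ℝ) := by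
      exact_mod_cast min_le_left _ _
    have hkv2 : ((min ((r * aZ) % qZ) (qZ - (r * aZ) % qZ) : ℤ):ℝ)
        ≤ ((qZ - (r * aZ) % qZ : ℤ):ℝ) := by exact_mod_cast min_le_right _ _
    have hv0 : (0:ℝ) ≤ (((r * aZ) % qZ : ℤ):ℝ) := by exact_mod_cast hv_nonneg r
    have hvq : (((r * aZ) % qZ : ℤ):ℝ) < (q:ℝ) := by
      rw [← hqZR]; exact_mod_cast hv_lt r
    have hsub : ((qZ - (r * aZ) % qZ : ℤ):ℝ) = (q:ℝ) - (((r * aZ) % qZ : ℤ):ℝ) := by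
      rw [← hqZR]; push_cast; ring
    rcases le_or_gt n 0 with hn | hn
    · have hnR : (n:ℝ) ≤ 0 := by exact_mod_cast hn
      have hd : ((min ((r * aZ) % qZ) (qZ - (r * aZ) % qZ) : ℤ):ℝ)/(q:ℝ)
          ≤ (((r * aZ) % qZ : ℤ):ℝ)/(q:ℝ) := (div_le_div_iff_of_pos_right hqR).2 hkv1
      have habs' : (((r * aZ) % qZ : ℤ):ℝ)/(q:ℝ) - (n:ℝ) ≤ |(((r * aZ) % qZ : ℤ):ℝ)/(q:ℝ) - (n:ℝ)| :=
        le_abs_self _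
      linarith
    · have hnR : (1:ℝ) ≤ (n:ℝ) := by exact_mod_cast hn
      have hd : ((min ((r * aZ) % qZ) (qZ - (r * aZ) % qZ) : ℤ):ℝ)/(q:ℝ)
          ≤ ((qZ - (r * aZ) % qZ : ℤ):ℝ)/(q:ℝ) := (div_le_div_iff_of_pos_right hqR).2 hkv2
      have he : ((qZ - (r * aZ) % qZ : ℤ):ℝ)/(q:ℝ) = 1 - (((r * aZ) % qZ : ℤ):ℝ)/(q:ℝ) := by
        rw [hsub]
        field_simp
      have habs' : (n:ℝ) - (((r * aZ) % qZ : ℤ):ℝ)/(q:ℝ) ≤ |(((r * aZ) % qZ : ℤ):ℝ)/(q:ℝ) - (n:ℝ)| := by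
        rw [abs_sub_comm]
        exact le_abs_self _
      linarith
  -- split into bad and good residues
  set sAll : Finset ℤ := Finset.Icc (-N) N with hsAlldef
  set Pbad : ℤ → Prop :=
    fun x => ((min (((x % qZ) * aZ) % qZ) (qZ - ((x % qZ) * aZ) % qZ) : ℤ):ℝ) ≤ c + 2 with hPbad
  have hsplit : ∑ x ∈ sAll, minPhi X ((x:ℝ)*α)
      = ∑ x ∈ sAll.filter Pbad, minPhi X ((x:ℝ)*α)
        + ∑ x ∈ sAll.filter (fun x => ¬ Pbad x), minPhi X ((x:ℝ)*α) :=
    (Finset.sum_filter_add_sum_filter_not sAll Pbad _).symm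
  -- various global facts
  have hlogq : Real.log (q:ℝ) ≤ Real.log X := Real.log_le_log hqR hqX
  have hlogq0 : 0 ≤ Real.log (q:ℝ) := Real.log_nonneg hqR1
  have hlog2 : (1:ℝ) ≤ 2 * Real.log X := by
    have h1 : Real.log 2 ≤ Real.log X := Real.log_le_log (by norm_num) hX
    have h2 := Real.log_two_gt_d9
    linarith
  have hlogX0 : (0:ℝ) ≤ Real.log X := by linarith
  have hF2X : 2*X ≤ X^2/Q := by
    rw [le_div_iff₀ hQ0]
    nlinarith
  have hFX : X ≤ X^2/Q := by linarith
  have hF0 : (0:ℝ) ≤ X^2/Q := by positivity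
  -- GOOD PART
  have hGoodPt : ∀ x ∈ sAll.filter (fun x => ¬ Pbad x), minPhi X ((x:ℝ)*α)
      ≤ ((c+2)*(q:ℝ)/2)
        * ((min (((x % qZ) * aZ) % qZ) (qZ - ((x % qZ) * aZ) % qZ) : ℤ):ℝ)⁻¹ := by
    intro x hx
    obtain ⟨hxAll, hPx⟩ := Finset.mem_filter.1 hx
    set K : ℝ := ((min (((x % qZ) * aZ) % qZ) (qZ - ((x % qZ) * aZ) % qZ) : ℤ):ℝ) with hKdef
    set θ : ℝ := ((((x % qZ) * aZ) % qZ : ℤ):ℝ)/(q:ℝ) with hθdef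
    have hPx' : ¬ K ≤ c + 2 := hPx
    have hkgt : c + 2 < K := lt_of_not_ge hPx'
    have hlow : (K - c)/(q:ℝ) ≤ distNearInt (θ + (x:ℝ)*β) := by
      have h1 := dni_sub_abs_le θ ((x:ℝ)*β)
      have h2 := hdnivq (x % qZ)
      have h3 := hxβ x (by rwa [hsAlldef] at hxAll)
      rw [sub_div]
      rw [← hKdef, ← hθdef] at h2
      linarith
    have hpos : 0 < (K - c)/(q:ℝ) := div_pos (by linarith) hqR
    have h5 := minPhi_le_inv X (θ + (x:ℝ)*β) _ hpos hlow
    rw [hminPhi_eq x, ← hθdef]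
    calc minPhi X (θ + (x:ℝ)*β) ≤ ((K - c)/(q:ℝ))⁻¹ := h5
      _ = (q:ℝ)/(K - c) := by rw [inv_div]
      _ ≤ ((c+2)*(q:ℝ)/2) * K⁻¹ := by
          have hk0 : (0:ℝ) < K := by linarith
          have hkc : (0:ℝ) < K - c := by linarith
          rw [← div_eq_mul_inv, div_le_div_iff₀ hkc hk0]
          nlinarith [mul_nonneg (mul_nonneg hqR.le hc.le) (sub_nonneg.2 hkgt.le)]
  have hmaps_mod : ∀ x : ℤ, x % qZ ∈ Finset.Ico (0:ℤ) qZ := by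
    intro x
    simp only [Finset.mem_Ico]
    exact ⟨Int.emod_nonneg _ (ne_of_gt hqZ), Int.emod_lt_of_pos _ hqZ⟩
  have hmin_nonneg : ∀ r : ℤ, (0:ℝ) ≤ ((min ((r * aZ) % qZ) (qZ - (r * aZ) % qZ) : ℤ):ℝ) := by
    intro r
    have h1 := hv_nonneg r
    have h2 := hv_lt r
    have h3 : (0:ℤ) ≤ min ((r * aZ) % qZ) (qZ - (r * aZ) % qZ) := le_min h1 (by omega)
    exact_mod_cast h3
  have hBfib : ∀ r ∈ Finset.Ico (0:ℤ) qZ,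
      (((sAll.filter (fun x => ¬ Pbad x)).filter fun x => x % qZ = r).card : ℝ)
        ≤ 2*c*X/(q:ℝ) + 2 := by
    intro r _
    have hsub : (sAll.filter (fun x => ¬ Pbad x)).filter (fun x => x % qZ = r)
        ⊆ sAll.filter (fun x => x % qZ = r) := by
      intro y hy
      simp only [Finset.mem_filter] at hy ⊢
      exact ⟨hy.1.1, hy.2⟩
    have h1 : (((sAll.filter (fun x => ¬ Pbad x)).filter (fun x => x % qZ = r)).card : ℝ)
        ≤ ((sAll.filter (fun x => x % qZ = r)).card : ℝ) := by
      exact_mod_cast Finset.card_le_card hsub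
    have h2 := card_class N qZ r hN0 hqZ
    rw [hqZR] at h2
    have h3 : 2*(N:ℝ)/(q:ℝ) ≤ 2*c*X/(q:ℝ) := by
      apply (div_le_div_iff_of_pos_right hqR).2
      linarith
    have h4 : sAll.filter (fun x => x % qZ = r) = (Finset.Icc (-N) N).filter (fun x => x % qZ = r) := by
      rw [hsAlldef]
    rw [h4] at h1
    linarith
  have hGoodSum : ∑ x ∈ sAll.filter (fun x => ¬ Pbad x), minPhi X ((x:ℝ)*α)
      ≤ (2*c*X/(q:ℝ) + 2) * ∑ r ∈ Finset.Ico (0:ℤ) qZ,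
          (((c+2)*(q:ℝ)/2) * ((min ((r * aZ) % qZ) (qZ - (r * aZ) % qZ) : ℤ):ℝ)⁻¹) := by
    apply fiber_sum _ _ (fun x => x % qZ) _ _ _ (fun x _ => hmaps_mod x) hGoodPt
    · intro r _
      exact mul_nonneg (by positivity) (inv_nonneg.2 (hmin_nonneg r))
    · exact hBfib
  have hkSum := sum_k_inv qZ aZ hqZ hco
  rw [hqZR] at hkSum
  have hSk0 : (0:ℝ) ≤ ∑ r ∈ Finset.Ico (0:ℤ) qZ,
      ((min ((r * aZ) % qZ) (qZ - (r * aZ) % qZ) : ℤ):ℝ)⁻¹ :=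
    Finset.sum_nonneg (fun r _ => inv_nonneg.2 (hmin_nonneg r))
  have hGoodE : ∑ x ∈ sAll.filter (fun x => ¬ Pbad x), minPhi X ((x:ℝ)*α)
      ≤ 6*(c+1)*(c+2)*((X^2/Q) * Real.log X) := by
    have e1 : ∑ r ∈ Finset.Ico (0:ℤ) qZ,
        (((c+2)*(q:ℝ)/2) * ((min ((r * aZ) % qZ) (qZ - (r * aZ) % qZ) : ℤ):ℝ)⁻¹)
        = ((c+2)*(q:ℝ)/2) * ∑ r ∈ Finset.Ico (0:ℤ) qZ,
            ((min ((r * aZ) % qZ) (qZ - (r * aZ) % qZ) : ℤ):ℝ)⁻¹ := by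
      rw [Finset.mul_sum]
    calc ∑ x ∈ sAll.filter (fun x => ¬ Pbad x), minPhi X ((x:ℝ)*α)
        ≤ (2*c*X/(q:ℝ) + 2) * (((c+2)*(q:ℝ)/2) * ∑ r ∈ Finset.Ico (0:ℤ) qZ,
            ((min ((r * aZ) % qZ) (qZ - (r * aZ) % qZ) : ℤ):ℝ)⁻¹) := by
          rw [← e1]; exact hGoodSum
      _ ≤ (2*c*X/(q:ℝ) + 2) * (((c+2)*(q:ℝ)/2) * (2*(1 + Real.log (q:ℝ)))) := by
          apply mul_le_mul_of_nonneg_left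
            (mul_le_mul_of_nonneg_left hkSum (by positivity)) (by positivity)
      _ = 2*(c+2)*(c*X + (q:ℝ))*(1 + Real.log (q:ℝ)) := by field_simp
      _ ≤ 2*(c+2)*((c+1)*X)*(3*Real.log X) := by
          have t1 : c*X + (q:ℝ) ≤ (c+1)*X := by linarith
          have t2 : 1 + Real.log (q:ℝ) ≤ 3*Real.log X := by linarith
          have nn1 : (0:ℝ) ≤ 2*(c+2) := by linarith
          have nn3 : (0:ℝ) ≤ 1 + Real.log (q:ℝ) := by linarith
          nlinarith [mul_le_mul (mul_le_mul_of_nonneg_left t1 nn1) t2 nn3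
            (by positivity : (0:ℝ) ≤ 2*(c+2)*((c+1)*X))]
      _ = 6*(c+1)*(c+2)*(X * Real.log X) := by ring
      _ ≤ 6*(c+1)*(c+2)*((X^2/Q) * Real.log X) := by
          apply mul_le_mul_of_nonneg_left _ (by positivity)
          exact mul_le_mul_of_nonneg_right hFX hlogX0
  -- BAD PART
  set badR : Finset ℤ := (Finset.Ico (0:ℤ) qZ).filter
    (fun r => ((min ((r*aZ)%qZ) (qZ - (r*aZ)%qZ) : ℤ):ℝ) ≤ c + 2) with hbadRdef
  have hmapsBad : ∀ x ∈ sAll.filter Pbad, x % qZ ∈ badR := by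
    intro x hx
    obtain ⟨_, hPx⟩ := Finset.mem_filter.1 hx
    rw [hbadRdef]
    exact Finset.mem_filter.2 ⟨hmaps_mod x, hPx⟩
  have hcardBadR : ((badR.card : ℕ):ℝ) ≤ 2*c + 7 := by
    rw [hbadRdef]
    exact card_badR qZ aZ c hqZ hco hc
  have hE2 : X^2/Q ≤ 2*((X^2/Q) * Real.log X) := by
    nlinarith [mul_nonneg hF0 (by linarith : (0:ℝ) ≤ 2*Real.log X - 1)]
  have hE'0 : (0:ℝ) ≤ (X^2/Q) * Real.log X := mul_nonneg hF0 hlogX0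
  have hBfibBad : ∀ r ∈ badR,
      (((sAll.filter Pbad).filter fun x => x % qZ = r).card : ℝ) ≤ 2*c*X/(q:ℝ) + 2 := by
    intro r _
    have hsub : (sAll.filter Pbad).filter (fun x => x % qZ = r)
        ⊆ sAll.filter (fun x => x % qZ = r) := by
      intro y hy
      simp only [Finset.mem_filter] at hy ⊢
      exact ⟨hy.1.1, hy.2⟩
    have h1 : (((sAll.filter Pbad).filter (fun x => x % qZ = r)).card : ℝ)
        ≤ ((sAll.filter (fun x => x % qZ = r)).card : ℝ) := by
      exact_mod_cast Finset.card_le_card hsub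
    have h2 := card_class N qZ r hN0 hqZ
    rw [hqZR] at h2
    have h3 : 2*(N:ℝ)/(q:ℝ) ≤ 2*c*X/(q:ℝ) := by
      apply (div_le_div_iff_of_pos_right hqR).2
      linarith
    have h4 : sAll.filter (fun x => x % qZ = r) = (Finset.Icc (-N) N).filter (fun x => x % qZ = r) := by
      rw [hsAlldef]
    rw [h4] at h1
    linarith
  have hBadE : ∑ x ∈ sAll.filter Pbad, minPhi X ((x:ℝ)*α)
      ≤ 150*(c+2)^2*((X^2/Q) * Real.log X) := by
    rcases hdich with hqQ | hβlow
    · -- case q > Q : all bad terms are at most X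
      have h := fiber_sum (sAll.filter Pbad) badR (fun x => x % qZ)
        (fun x => minPhi X ((x:ℝ)*α)) (fun _ => X) (2*c*X/(q:ℝ) + 2)
        hmapsBad (fun x _ => minPhi_le_X X _) (fun _ _ => by linarith) hBfibBad
      have hconst : ∑ _r ∈ badR, X = (badR.card : ℝ) * X := by
        rw [Finset.sum_const, nsmul_eq_mul]
      rw [hconst] at h
      have hq' : 2*c*X/(q:ℝ) ≤ 2*c*X/Q := by
        apply div_le_div_of_nonneg_left (by positivity) hQ0 hqQ.le
      have hstep : (2*c*X/(q:ℝ) + 2) * ((badR.card : ℝ) * X) ≤ (2*c*X/Q + 2) * ((2*c+7) * X) := by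
        apply mul_le_mul (by linarith) (mul_le_mul_of_nonneg_right hcardBadR hX0.le)
          (by positivity) (by positivity)
      have hexp : (2*c*X/Q + 2) * ((2*c+7) * X) = (2*c+7)*(2*c*(X^2/Q) + 2*X) := by
        field_simp
      have hin : 2*c*(X^2/Q) + 2*X ≤ (4*c+4)*((X^2/Q) * Real.log X) := by
        have t1 : 2*c*(X^2/Q) ≤ 2*c*(2*((X^2/Q) * Real.log X)) :=
          mul_le_mul_of_nonneg_left hE2 (by positivity)
        have t2 : 2*X ≤ 2*((X^2/Q) * Real.log X) := by linarith
        linarith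
      have hfin : (2*c+7)*(2*c*(X^2/Q) + 2*X) ≤ (2*c+7)*((4*c+4)*((X^2/Q) * Real.log X)) :=
        mul_le_mul_of_nonneg_left hin (by linarith)
      have hcoef : (2*c+7)*((4*c+4)*((X^2/Q) * Real.log X)) ≤ 150*(c+2)^2*((X^2/Q) * Real.log X) := by
        have hcc : (2*c+7)*(4*c+4) ≤ 150*(c+2)^2 := by nlinarith
        calc (2*c+7)*((4*c+4)*((X^2/Q) * Real.log X))
            = ((2*c+7)*(4*c+4))*((X^2/Q) * Real.log X) := by ring
          _ ≤ 150*(c+2)^2*((X^2/Q) * Real.log X) := mul_le_mul_of_nonneg_right hcc hE'0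
      calc ∑ x ∈ sAll.filter Pbad, minPhi X ((x:ℝ)*α)
          ≤ (2*c*X/(q:ℝ) + 2) * ((badR.card : ℝ) * X) := h
        _ ≤ (2*c*X/Q + 2) * ((2*c+7) * X) := hstep
        _ = (2*c+7)*(2*c*(X^2/Q) + 2*X) := hexp
        _ ≤ (2*c+7)*((4*c+4)*((X^2/Q) * Real.log X)) := hfin
        _ ≤ 150*(c+2)^2*((X^2/Q) * Real.log X) := hcoef
    · -- case |β| > Q/(q X²) : arithmetic progression argument per bad class
      have hβ0 : β ≠ 0 := by
        intro h
        rw [h, abs_zero] at hβlow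
        exact absurd hβlow (not_lt.2 (by positivity))
      have hδne : (q:ℝ)*β ≠ 0 := mul_ne_zero (ne_of_gt hqR) hβ0
      have hDlow : Q/X^2 < |(q:ℝ)*β| := by
        rw [abs_mul, abs_of_pos hqR]
        have h1 := (mul_lt_mul_iff_right₀ hqR).2 hβlow
        calc Q/X^2 = (q:ℝ) * (Q/((q:ℝ)*X^2)) := by field_simp
          _ < (q:ℝ) * |β| := h1
      have hD'0 : (0:ℝ) < |(q:ℝ)*β| := abs_pos.2 hδne
      have hQX2 : (0:ℝ) < Q/X^2 := by positivity
      have h2D : 2/|(q:ℝ)*β| ≤ 2*(X^2/Q) := by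
        have h1 : 2/|(q:ℝ)*β| ≤ 2/(Q/X^2) :=
          div_le_div_of_nonneg_left (by norm_num) hQX2 hDlow.le
        have e : 2/(Q/X^2) = 2*(X^2/Q) := by
          field_simp
        linarith
      have hlogarg : Real.log (1/(2*|(q:ℝ)*β|) + 1) ≤ 2*Real.log X := by
        have h1 : 1/(2*|(q:ℝ)*β|) ≤ 1/(2*(Q/X^2)) := by
          apply div_le_div_of_nonneg_left (by norm_num) (by positivity)
          linarith
        have e : 1/(2*(Q/X^2)) = X^2/(2*Q) := by field_simp
        have h2 : X^2/(2*Q) ≤ X^2/2 := by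
          apply div_le_div_of_nonneg_left (by positivity) (by norm_num)
          linarith
        have hXsq : (4:ℝ) ≤ X^2 := by
          rw [show (4:ℝ) = 2^2 by norm_num]
          exact pow_le_pow_left₀ (by norm_num) hX 2
        have h3 : 1/(2*|(q:ℝ)*β|) + 1 ≤ X^2 := by
          rw [e] at h1
          linarith
        calc Real.log (1/(2*|(q:ℝ)*β|) + 1) ≤ Real.log (X^2) :=
              Real.log_le_log (by positivity) h3
          _ = 2*Real.log X := by rw [Real.log_pow]; norm_num
      have hlogarg0 : (0:ℝ) ≤ Real.log (1/(2*|(q:ℝ)*β|) + 1) := by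
        apply Real.log_nonneg
        have : (0:ℝ) < 1/(2*|(q:ℝ)*β|) := by positivity
        linarith
      have hclass : ∀ r ∈ badR,
          ∑ x ∈ (sAll.filter Pbad).filter (fun x => x % qZ = r), minPhi X ((x:ℝ)*α)
            ≤ (2*c + 2) * (2*X + (2*(X^2/Q)) * (1 + 2*Real.log X)) := by
        intro r hr
        have hxfib : ∀ x ∈ (sAll.filter Pbad).filter (fun x => x % qZ = r),
            x % qZ = r ∧ x ∈ Finset.Icc (-N) N := by
          intro x hx
          have h1 := Finset.mem_filter.1 hx
          have h2 := Finset.mem_filter.1 h1.1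
          rw [← hsAlldef]
          exact ⟨h1.2, h2.1⟩
        have hpoint : ∀ x ∈ (sAll.filter Pbad).filter (fun x => x % qZ = r),
            ((((r * aZ) % qZ : ℤ):ℝ)/(q:ℝ) + (r:ℝ)*β) + ((x / qZ : ℤ):ℝ) * ((q:ℝ)*β)
              = (((x % qZ) * aZ % qZ : ℤ):ℝ)/(q:ℝ) + (x:ℝ)*β := by
          intro x hx
          obtain ⟨hxr, _⟩ := hxfib x hx
          have hxeq : qZ * (x / qZ) + r = x := by
            conv_rhs => rw [← Int.mul_ediv_add_emod x qZ]
            rw [hxr]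
          have hxeqR : (q:ℝ) * ((x / qZ : ℤ):ℝ) + (r:ℝ) = (x:ℝ) := by
            have := congrArg (fun t : ℤ => (t:ℝ)) hxeq
            push_cast at this
            rw [← hqZR]
            exact_mod_cast this
          rw [hxr]
          linear_combination β * hxeqR
        have hinj2 : ∀ x ∈ (sAll.filter Pbad).filter (fun x => x % qZ = r),
            ∀ y ∈ (sAll.filter Pbad).filter (fun x => x % qZ = r), x / qZ = y / qZ → x = y := by
          intro x hx y hy hxy
          have h1 := (hxfib x hx).1
          have h2 := (hxfib y hy).1
          have ex : qZ * (x / qZ) + x % qZ = x := Int.mul_ediv_add_emod x qZ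
          have ey : qZ * (y / qZ) + y % qZ = y := Int.mul_ediv_add_emod y qZ
          rw [← ex, ← ey, hxy, h1, h2]
        have hsum_eq : ∑ x ∈ (sAll.filter Pbad).filter (fun x => x % qZ = r), minPhi X ((x:ℝ)*α)
            = ∑ m ∈ ((sAll.filter Pbad).filter (fun x => x % qZ = r)).image (fun x => x / qZ),
                minPhi X ((((r * aZ) % qZ : ℤ):ℝ)/(q:ℝ) + (r:ℝ)*β + (m:ℝ)*((q:ℝ)*β)) := by
          rw [Finset.sum_image hinj2]
          apply Finset.sum_congr rfl
          intro x hx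
          rw [hminPhi_eq x, ← hpoint x hx]
        have hmem : ∀ m ∈ ((sAll.filter Pbad).filter (fun x => x % qZ = r)).image (fun x => x / qZ),
            ((((r * aZ) % qZ : ℤ):ℝ)/(q:ℝ) - c) ≤ (((r * aZ) % qZ : ℤ):ℝ)/(q:ℝ) + (r:ℝ)*β + (m:ℝ)*((q:ℝ)*β)
              ∧ (((r * aZ) % qZ : ℤ):ℝ)/(q:ℝ) + (r:ℝ)*β + (m:ℝ)*((q:ℝ)*β)
                  ≤ ((((r * aZ) % qZ : ℤ):ℝ)/(q:ℝ) - c) + 2*c := by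
          intro m hm
          obtain ⟨x, hx, rfl⟩ := Finset.mem_image.1 hm
          obtain ⟨hxr, hxIcc⟩ := hxfib x hx
          have heq : (((r * aZ) % qZ : ℤ):ℝ)/(q:ℝ) + (r:ℝ)*β + ((x / qZ : ℤ):ℝ)*((q:ℝ)*β)
              = (((x % qZ) * aZ % qZ : ℤ):ℝ)/(q:ℝ) + (x:ℝ)*β := hpoint x hx
          have hvr : (((x % qZ) * aZ % qZ : ℤ):ℝ) = (((r * aZ) % qZ : ℤ):ℝ) := by rw [hxr]
          have h3 := hxβ x (by rwa [← hsAlldef] at hxIcc)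
          have hcq : c/(q:ℝ) ≤ c := div_le_self hc.le hqR1
          obtain ⟨ha1', ha2'⟩ := abs_le.1 h3
          rw [heq, hvr]
          constructor <;> linarith
        rw [hsum_eq]
        have happ := ap_sum X ((((r * aZ) % qZ : ℤ):ℝ)/(q:ℝ) + (r:ℝ)*β) ((q:ℝ)*β) hX hδne
          (((sAll.filter Pbad).filter (fun x => x % qZ = r)).image (fun x => x / qZ))
          ((((r * aZ) % qZ : ℤ):ℝ)/(q:ℝ) - c) (2*c) (by positivity) (by
            intro m hm
            have := hmem m hm
            constructor
            · linarith [this.1]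
            · linarith [this.2])
        have hW : (2*c + 2) * (2*X + (2/|(q:ℝ)*β|) * (1 + Real.log (1/(2*|(q:ℝ)*β|) + 1)))
            ≤ (2*c + 2) * (2*X + (2*(X^2/Q)) * (1 + 2*Real.log X)) := by
          apply mul_le_mul_of_nonneg_left _ (by linarith)
          have hfac : (2/|(q:ℝ)*β|) * (1 + Real.log (1/(2*|(q:ℝ)*β|) + 1))
              ≤ (2*(X^2/Q)) * (1 + 2*Real.log X) := by
            apply mul_le_mul h2D (by linarith) (by linarith) (by positivity)
          linarith
        calc ∑ m ∈ ((sAll.filter Pbad).filter (fun x => x % qZ = r)).image (fun x => x / qZ),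
              minPhi X ((((r * aZ) % qZ : ℤ):ℝ)/(q:ℝ) + (r:ℝ)*β + (m:ℝ)*((q:ℝ)*β))
            ≤ (2*c + 2) * (2*X + (2/|(q:ℝ)*β|) * (1 + Real.log (1/(2*|(q:ℝ)*β|) + 1))) := by
              have e : ∀ m : ℤ, (((r * aZ) % qZ : ℤ):ℝ)/(q:ℝ) + (r:ℝ)*β + (m:ℝ)*((q:ℝ)*β)
                  = ((((r * aZ) % qZ : ℤ):ℝ)/(q:ℝ) + (r:ℝ)*β) + (m:ℝ)*((q:ℝ)*β) := by
                intro m; ring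
              exact happ
          _ ≤ (2*c + 2) * (2*X + (2*(X^2/Q)) * (1 + 2*Real.log X)) := hW
      have hWnn : (0:ℝ) ≤ (2*c + 2) * (2*X + (2*(X^2/Q)) * (1 + 2*Real.log X)) := by
        apply mul_nonneg (by linarith)
        have : (0:ℝ) ≤ (2*(X^2/Q)) * (1 + 2*Real.log X) := mul_nonneg (by positivity) (by linarith)
        linarith
      have hsum2 : ∑ x ∈ sAll.filter Pbad, minPhi X ((x:ℝ)*α)
          ≤ (2*c+7) * ((2*c + 2) * (2*X + (2*(X^2/Q)) * (1 + 2*Real.log X))) := by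
        rw [← Finset.sum_fiberwise_of_maps_to hmapsBad (fun x => minPhi X ((x:ℝ)*α))]
        calc ∑ r ∈ badR, ∑ x ∈ (sAll.filter Pbad).filter (fun x => x % qZ = r), minPhi X ((x:ℝ)*α)
            ≤ ∑ _r ∈ badR, (2*c + 2) * (2*X + (2*(X^2/Q)) * (1 + 2*Real.log X)) :=
              Finset.sum_le_sum hclass
          _ = (badR.card : ℝ) * ((2*c + 2) * (2*X + (2*(X^2/Q)) * (1 + 2*Real.log X))) := by
              rw [Finset.sum_const, nsmul_eq_mul]
          _ ≤ (2*c+7) * ((2*c + 2) * (2*X + (2*(X^2/Q)) * (1 + 2*Real.log X))) :=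
              mul_le_mul_of_nonneg_right hcardBadR hWnn
      have hin : 2*X + (2*(X^2/Q)) * (1 + 2*Real.log X) ≤ 10*((X^2/Q) * Real.log X) := by
        have t1 : 2*X ≤ 2*((X^2/Q) * Real.log X) := by linarith
        have t2 : (2*(X^2/Q)) * (1 + 2*Real.log X) ≤ (2*(X^2/Q)) * (4*Real.log X) :=
          mul_le_mul_of_nonneg_left (by linarith) (by positivity)
        have t3 : (2*(X^2/Q)) * (4*Real.log X) = 8*((X^2/Q) * Real.log X) := by ring
        linarith
      have hfin2 : (2*c+7) * ((2*c + 2) * (2*X + (2*(X^2/Q)) * (1 + 2*Real.log X)))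
          ≤ (2*c+7) * ((2*c+2) * (10*((X^2/Q) * Real.log X))) := by
        apply mul_le_mul_of_nonneg_left _ (by linarith)
        exact mul_le_mul_of_nonneg_left hin (by linarith)
      have hcoef : (2*c+7) * ((2*c+2) * (10*((X^2/Q) * Real.log X)))
          ≤ 150*(c+2)^2*((X^2/Q) * Real.log X) := by
        have hcc : (2*c+7)*((2*c+2)*10) ≤ 150*(c+2)^2 := by nlinarith
        calc (2*c+7) * ((2*c+2) * (10*((X^2/Q) * Real.log X)))
            = ((2*c+7)*((2*c+2)*10))*((X^2/Q) * Real.log X) := by ring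
          _ ≤ 150*(c+2)^2*((X^2/Q) * Real.log X) := mul_le_mul_of_nonneg_right hcc hE'0
      linarith
  -- FINAL ASSEMBLY
  have hgoal_eq : (1000*(c+2)^3) * Real.log X * Q⁻¹ * X^2
      = (1000*(c+2)^3) * ((X^2/Q) * Real.log X) := by
    rw [div_eq_mul_inv]; ring
  rw [hsplit, hgoal_eq]
  have hcoef2 : 150*(c+2)^2 + 6*(c+1)*(c+2) ≤ 1000*(c+2)^3 := by nlinarith
  have hlast : (150*(c+2)^2 + 6*(c+1)*(c+2))*((X^2/Q) * Real.log X)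
      ≤ (1000*(c+2)^3)*((X^2/Q) * Real.log X) := mul_le_mul_of_nonneg_right hcoef2 hE'0
  nlinarith [hGoodE, hBadE]
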